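/- Let Y be a Banach space and y₁*, ..., y_q* ∈ Y*. For any finitely supported tensor u = ∑_{i=p}^{q} αᵢ yᵢ* ⊗ eᵢ in Y* ⊗ c₀ (where (eᵢ) is the unit vector basis of c₀), the projective tensor norm of u in Y* ⊗̂_π c₀ equals the integral norm of u viewed as an operator from Y to ℓ^∞, i.e., ‖u‖_{Y*⊗̂_π c₀} = ‖u‖_{I(Y, ℓ^∞)}. -/

import Mathlib

open Filter Topology ZeroAtInfty

/-- The Banach space `c₀` of real null sequences. -/
abbrev czero : Type := ZeroAtInftyContinuousMap ℕ ℝ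

/-- The Banach space `ℓ¹` of absolutely summable real sequences. -/
noncomputable abbrev ell1 : Type := lp (fun _ : ℕ => ℝ) 1

/-- The unit vector basis `(eᵢ)` of `c₀`. -/
noncomputable def czeroBasis (i : ℕ) : czero where
  toFun := fun j => if j = i then (1 : ℝ) else 0
  continuous_toFun := continuous_of_discreteTopology
  zero_at_infty' := by
    rw [cocompact_eq_atTop]
    refine tendsto_const_nhds.congr' ?_
    filter_upwards [Filter.eventually_ge_atTop (i + 1)] with j hj
    have : j ≠ i := by omega
    simp [this]

lemma czeroBasis_apply (i j : ℕ) : czeroBasis i j = if j = i then (1:ℝ) else 0 := rfl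

/-- Evaluation at a point as a continuous linear functional on `c₀`. -/
noncomputable def czeroEval (i : ℕ) : czero →L[ℝ] ℝ :=
  LinearMap.mkContinuous
    { toFun := fun x => x i
      map_add' := fun _ _ => rfl
      map_smul' := fun _ _ => rfl } 1
    (fun x => by
      simpa using (x.toBCF.norm_coe_le_norm i).trans
        (le_of_eq ZeroAtInftyContinuousMap.norm_toBCF_eq_norm))

@[simp] lemma czeroEval_apply (i : ℕ) (x : czero) : czeroEval i x = x i := rfl

lemma czero_abs_apply_le_norm (x : czero) (i : ℕ) : |x i| ≤ ‖x‖ :=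
  (x.toBCF.norm_coe_le_norm i).trans (le_of_eq ZeroAtInftyContinuousMap.norm_toBCF_eq_norm)

lemma czero_norm_le (x : czero) {C : ℝ} (h0 : 0 ≤ C) (h : ∀ i, |x i| ≤ C) : ‖x‖ ≤ C := by
  rw [← ZeroAtInftyContinuousMap.norm_toBCF_eq_norm]
  exact (BoundedContinuousFunction.norm_le h0).2 h

lemma czero_coe_sum {ι : Type*} (s : Finset ι) (f : ι → czero) (j : ℕ) :
    (∑ i ∈ s, f i) j = ∑ i ∈ s, f i j := by
  exact map_sum (czeroEval j) f s

lemma isCompactOperator_smulRight {X Y : Type*} [NormedAddCommGroup X] [NormedSpace ℝ X]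
    [NormedAddCommGroup Y] [NormedSpace ℝ Y] (f : X →L[ℝ] ℝ) (v : Y) :
    IsCompactOperator (f.smulRight v) := by
  refine ⟨(fun c : ℝ => c • v) '' Metric.closedBall 0 ‖f‖,
    (isCompact_closedBall 0 ‖f‖).image (continuous_id.smul continuous_const), ?_⟩
  refine Filter.mem_of_superset (Metric.closedBall_mem_nhds 0 one_pos) ?_
  intro x hx
  refine ⟨f x, ?_, rfl⟩
  simp only [Metric.mem_closedBall, dist_zero_right] at hx ⊢
  calc ‖f x‖ ≤ ‖f‖ * ‖x‖ := f.le_opNorm x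
  _ ≤ ‖f‖ * 1 := by gcongr
  _ = ‖f‖ := mul_one _

lemma isCompactOperator_finsetSum {X Y : Type*} [NormedAddCommGroup X] [NormedSpace ℝ X]
    [NormedAddCommGroup Y] [NormedSpace ℝ Y] {ι : Type*} (s : Finset ι) (f : ι → X →L[ℝ] Y)
    (h : ∀ i ∈ s, IsCompactOperator (f i)) : IsCompactOperator (∑ i ∈ s, f i : X →L[ℝ] Y) := by
  classical
  induction s using Finset.induction with
  | empty => simpa using isCompactOperator_zero
  | @insert a s' ha ih =>
    rw [Finset.sum_insert ha]
    have hadd : ⇑(f a + ∑ i ∈ s', f i) = ⇑(f a) + ⇑(∑ i ∈ s', f i) := rfl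
    rw [show (IsCompactOperator ⇑(f a + ∑ i ∈ s', f i)) =
        (IsCompactOperator (⇑(f a) + ⇑(∑ i ∈ s', f i))) from congrArg _ hadd]
    exact IsCompactOperator.add (h a (Finset.mem_insert_self a s'))
      (ih fun i hi => h i (Finset.mem_insert_of_mem hi))

lemma lp_norm_single_one (i : ℕ) (a : ℝ) : ‖(lp.single 1 i a : ell1)‖ = |a| := by
  have := lp.norm_single (p := (1 : ENNReal)) (E := fun _ : ℕ => ℝ)
    (by norm_num) i a
  simpa [Real.norm_eq_abs] using this

lemma lp_sum_abs_le_norm (f : ell1) (s : Finset ℕ) : ∑ i ∈ s, |f i| ≤ ‖f‖ := by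
  have := lp.sum_rpow_le_norm_rpow (p := 1) (E := fun _ : ℕ => ℝ) (by norm_num) f s
  simpa [Real.norm_eq_abs] using this
lemma sign_bound {Y : Type*} [NormedAddCommGroup Y] [NormedSpace ℝ Y]
    (u : ℕ → Y) (C : ℝ) :
    ∀ (s : Finset ℕ) (b : Y) (t : ℕ → ℝ), (∀ i ∈ s, |t i| ≤ 1) →
    (∀ ε : ℕ → Bool, ‖b + ∑ i ∈ s, (if ε i then (1:ℝ) else -1) • u i‖ ≤ C) →
    ‖b + ∑ i ∈ s, t i • u i‖ ≤ C := by
  classical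
  intro s
  induction s using Finset.induction with
  | empty => intro b t _ hC; simpa using hC (fun _ => true)
  | @insert a s' ha ih =>
    intro b t ht hC
    rw [Finset.sum_insert ha, ← add_assoc]
    refine ih (b + t a • u a) t (fun i hi => ht i (Finset.mem_insert_of_mem hi)) ?_
    intro ε
    have h1 := hC (Function.update ε a true)
    have h2 := hC (Function.update ε a false)
    rw [Finset.sum_insert ha] at h1 h2
    have hs1 : ∑ i ∈ s', (if Function.update ε a true i then (1:ℝ) else -1) • u i
        = ∑ i ∈ s', (if ε i then (1:ℝ) else -1) • u i := by
      refine Finset.sum_congr rfl fun i hi => ?_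
      rw [Function.update_of_ne (by rintro rfl; exact ha hi)]
    have hs2 : ∑ i ∈ s', (if Function.update ε a false i then (1:ℝ) else -1) • u i
        = ∑ i ∈ s', (if ε i then (1:ℝ) else -1) • u i := by
      refine Finset.sum_congr rfl fun i hi => ?_
      rw [Function.update_of_ne (by rintro rfl; exact ha hi)]
    rw [hs1, Function.update_self] at h1
    rw [hs2, Function.update_self] at h2
    set w := ∑ i ∈ s', (if ε i then (1:ℝ) else -1) • u i
    have h1' : ‖b + (1:ℝ) • u a + w‖ ≤ C := by rw [add_assoc]; simpa using h1
    have h2' : ‖b + (-1:ℝ) • u a + w‖ ≤ C := by rw [add_assoc]; simpa using h2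
    have habs := ht a (Finset.mem_insert_self a s')
    rw [abs_le] at habs
    have key : b + t a • u a + w
        = ((1 + t a)/2) • (b + (1:ℝ) • u a + w) + ((1 - t a)/2) • (b + (-1:ℝ) • u a + w) := by
      module
    rw [key]
    calc ‖((1 + t a)/2) • (b + (1:ℝ) • u a + w) + ((1 - t a)/2) • (b + (-1:ℝ) • u a + w)‖
        ≤ ‖((1 + t a)/2) • (b + (1:ℝ) • u a + w)‖ + ‖((1 - t a)/2) • (b + (-1:ℝ) • u a + w)‖ :=
          norm_add_le _ _
      _ = ((1 + t a)/2) * ‖b + (1:ℝ) • u a + w‖ + ((1 - t a)/2) * ‖b + (-1:ℝ) • u a + w‖ := by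
          rw [norm_smul, norm_smul, Real.norm_of_nonneg (by linarith), Real.norm_of_nonneg (by linarith)]
      _ ≤ ((1 + t a)/2) * C + ((1 - t a)/2) * C := by
          have hC0 : (0:ℝ) ≤ C := le_trans (norm_nonneg _) h1'
          gcongr <;> first | linarith | exact h1' | exact h2'
      _ = C := by ring

/-- Near-attainment of the operator norm of a functional. -/
lemma exists_near_norm {Y : Type*} [NormedAddCommGroup Y] [NormedSpace ℝ Y]
    (w : Y →L[ℝ] ℝ) {δ : ℝ} (hδ : 0 < δ) : ∃ u : Y, ‖u‖ ≤ 1 ∧ ‖w‖ ≤ w u + δ := by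
  by_cases h : ‖w‖ ≤ δ
  · exact ⟨0, by simp, by simpa using h⟩
  push_neg at h
  have h0 : 0 ≤ ‖w‖ - δ := by linarith
  have : ¬ ∀ u : Y, ‖w u‖ ≤ (‖w‖ - δ) * ‖u‖ := by
    intro hc
    have := ContinuousLinearMap.opNorm_le_bound w h0 hc
    linarith
  push_neg at this
  obtain ⟨u₀, hu₀⟩ := this
  have hu₀ne : u₀ ≠ 0 := by
    rintro rfl
    simp only [map_zero, norm_zero, norm_zero, mul_zero] at hu₀
    exact absurd hu₀ (lt_irrefl 0).elim
  have hn : 0 < ‖u₀‖ := norm_pos_iff.2 hu₀ne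
  set u₁ := ‖u₀‖⁻¹ • u₀ with hu₁def
  have hu₁ : ‖u₁‖ = 1 := by
    rw [hu₁def, norm_smul, Real.norm_of_nonneg (by positivity), inv_mul_cancel₀ hn.ne']
  have hval : ‖w‖ - δ < ‖w u₁‖ := by
    have : w u₁ = ‖u₀‖⁻¹ * w u₀ := by rw [hu₁def, map_smul]; rfl
    rw [this, Real.norm_eq_abs, abs_mul, abs_of_nonneg (by positivity)]
    rw [Real.norm_eq_abs] at hu₀
    rw [inv_mul_eq_div, lt_div_iff₀ hn]
    linarith
  rcases le_or_gt 0 (w u₁) with hpos | hneg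
  · refine ⟨u₁, le_of_eq hu₁, ?_⟩
    rw [Real.norm_eq_abs, abs_of_nonneg hpos] at hval
    linarith
  · refine ⟨-u₁, by simp [hu₁], ?_⟩
    rw [Real.norm_eq_abs, abs_of_neg hneg] at hval
    rw [map_neg]
    linarith

set_option maxHeartbeats 1000000 in
theorem projective_norm_eq_integral_norm
    {Y : Type*} [NormedAddCommGroup Y] [NormedSpace ℝ Y] [CompleteSpace Y]
    (p q : ℕ) (α : ℕ → ℝ) (y : ℕ → StrongDual ℝ Y) :
    sSup {r : ℝ | ∃ T : StrongDual ℝ Y →L[ℝ] ell1, ‖T‖ ≤ 1 ∧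
        r = ∑ i ∈ Finset.Icc p q, α i * (T (y i) : ∀ _ : ℕ, ℝ) i} =
    sSup {r : ℝ | ∃ S : czero →L[ℝ] Y, ‖S‖ ≤ 1 ∧ IsCompactOperator S ∧
        r = ∑ i ∈ Finset.Icc p q, α i * y i (S (czeroBasis i))} := by
  classical
  set I := Finset.Icc p q with hIdef
  set A := {r : ℝ | ∃ T : StrongDual ℝ Y →L[ℝ] ell1, ‖T‖ ≤ 1 ∧
      r = ∑ i ∈ I, α i * (T (y i) : ∀ _ : ℕ, ℝ) i} with hAdef
  set B := {r : ℝ | ∃ S : czero →L[ℝ] Y, ‖S‖ ≤ 1 ∧ IsCompactOperator S ∧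
      r = ∑ i ∈ I, α i * y i (S (czeroBasis i))} with hBdef
  have h0A : (0:ℝ) ∈ A := by
    refine ⟨0, le_trans (le_of_eq ContinuousLinearMap.opNorm_zero) zero_le_one, ?_⟩
    symm
    refine Finset.sum_eq_zero fun i _ => ?_
    rw [ContinuousLinearMap.zero_apply, lp.coeFn_zero, Pi.zero_apply, mul_zero]
  have h0B : (0:ℝ) ∈ B := by
    refine ⟨0, le_trans (le_of_eq ContinuousLinearMap.opNorm_zero) zero_le_one, isCompactOperator_zero, ?_⟩
    symm
    refine Finset.sum_eq_zero fun i _ => ?_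
    rw [ContinuousLinearMap.zero_apply, map_zero, mul_zero]
  set K : ℝ := ∑ i ∈ I, |α i| * ‖y i‖ with hKdef
  have hBddA : BddAbove A := by
    refine ⟨K, ?_⟩
    rintro r ⟨T, hT, rfl⟩
    refine Finset.sum_le_sum fun i _ => ?_
    calc α i * (T (y i) : ∀ _ : ℕ, ℝ) i ≤ |α i * (T (y i) : ∀ _ : ℕ, ℝ) i| := le_abs_self _
      _ = |α i| * |(T (y i) : ∀ _ : ℕ, ℝ) i| := abs_mul _ _
      _ ≤ |α i| * ‖y i‖ := by
          refine mul_le_mul_of_nonneg_left ?_ (abs_nonneg _)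
          calc |(T (y i) : ∀ _ : ℕ, ℝ) i| ≤ ‖T (y i)‖ := by
                simpa [Real.norm_eq_abs] using
                  lp.norm_apply_le_norm (p := (1:ENNReal)) one_ne_zero (T (y i)) i
            _ ≤ ‖T‖ * ‖y i‖ := T.le_opNorm _
            _ ≤ 1 * ‖y i‖ := mul_le_mul_of_nonneg_right hT (norm_nonneg _)
            _ = ‖y i‖ := one_mul _
  have hBddB : BddAbove B := by
    refine ⟨K, ?_⟩
    rintro r ⟨S, hS, _, rfl⟩
    refine Finset.sum_le_sum fun i _ => ?_
    have hbasis : ‖czeroBasis i‖ ≤ 1 := by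
      refine czero_norm_le _ zero_le_one fun j => ?_
      rw [czeroBasis_apply]
      split <;> simp
    calc α i * y i (S (czeroBasis i)) ≤ |α i * y i (S (czeroBasis i))| := le_abs_self _
      _ = |α i| * |y i (S (czeroBasis i))| := abs_mul _ _
      _ ≤ |α i| * ‖y i‖ := by
          refine mul_le_mul_of_nonneg_left ?_ (abs_nonneg _)
          calc |y i (S (czeroBasis i))| ≤ ‖y i‖ * ‖S (czeroBasis i)‖ := (y i).le_opNorm _
            _ ≤ ‖y i‖ * 1 := by
                refine mul_le_mul_of_nonneg_left ?_ (norm_nonneg _)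
                calc ‖S (czeroBasis i)‖ ≤ ‖S‖ * ‖czeroBasis i‖ := S.le_opNorm _
                  _ ≤ 1 * 1 := mul_le_mul hS hbasis (norm_nonneg _) zero_le_one
                  _ = 1 := one_mul _
            _ = ‖y i‖ := mul_one _
  have hM0 : 0 ≤ sSup B := le_csSup hBddB h0B
  apply le_antisymm
  · refine csSup_le ⟨0, h0A⟩ ?_
    rintro a ⟨T, hT, rfl⟩
    -- setup: sign patterns indexed by subsets of I
    set E : Type := {ε : Finset ℕ // ε ∈ I.powerset} with hEdef
    set sg : Finset ℕ → ℕ → ℝ := fun ε i => if i ∈ ε then (1:ℝ) else -1 with hsgdef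
    have hsgabs : ∀ ε i, |sg ε i| ≤ 1 := by
      intro ε i; rw [hsgdef]; dsimp only; split_ifs <;> simp
    -- the embedding J : (ℕ → Y) →ₗ (E → Y)
    set J : (ℕ → Y) →ₗ[ℝ] (E → Y) :=
      { toFun := fun v ε => ∑ i ∈ I, sg ε.1 i • v i
        map_add' := by
          intro v w; funext ε
          simp only [Pi.add_apply, smul_add, Finset.sum_add_distrib]
        map_smul' := by
          intro c v; funext ε
          simp only [Pi.smul_apply, RingHom.id_apply, Finset.smul_sum]
          refine Finset.sum_congr rfl fun i _ => ?_
          rw [smul_comm] } with hJdef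
    have hJapp : ∀ (v : ℕ → Y) (ε : E), J v ε = ∑ i ∈ I, sg ε.1 i • v i := fun _ _ => rfl
    -- the functional g on (E → Y)
    set εT : E := ⟨I, Finset.mem_powerset_self I⟩ with hεT
    set εE : ℕ → E := fun i => ⟨I.erase i, Finset.mem_powerset.2 (Finset.erase_subset i I)⟩
      with hεE
    set g : (E → Y) →L[ℝ] ℝ := ∑ i ∈ I, (2⁻¹ * α i) •
      ((y i).comp ((ContinuousLinearMap.proj (R := ℝ) (φ := fun _ : E => Y) εT)
        - (ContinuousLinearMap.proj (εE i)))) with hgdef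
    have hg : ∀ w : E → Y, g w = ∑ i ∈ I, (2⁻¹ * α i) * (y i (w εT) - y i (w (εE i))) := by
      intro w
      rw [hgdef, ContinuousLinearMap.sum_apply]
      refine Finset.sum_congr rfl fun i _ => ?_
      rw [ContinuousLinearMap.smul_apply, ContinuousLinearMap.comp_apply, smul_eq_mul]
      congr 1
      rw [ContinuousLinearMap.sub_apply, map_sub]
      rfl
    have hgJ : ∀ v : ℕ → Y, g (J v) = ∑ i ∈ I, α i * y i (v i) := by
      intro v
      rw [hg]
      refine Finset.sum_congr rfl fun i hi => ?_
      have h1 : J v εT - J v (εE i) = (2:ℝ) • v i := by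
        rw [hJapp, hJapp, ← Finset.sum_sub_distrib]
        rw [Finset.sum_eq_single i]
        · rw [← sub_smul]
          congr 1
          rw [hsgdef]
          have h2 : i ∈ (εT : E).1 := hi
          have h3 : i ∉ (εE i : E).1 := Finset.notMem_erase i I
          simp only [if_pos h2, if_neg h3]
          norm_num
        · intro j hj hji
          have h2 : j ∈ (εT : E).1 := hj
          have h3 : j ∈ (εE i : E).1 := Finset.mem_erase.2 ⟨hji, hj⟩
          rw [hsgdef]
          simp only [if_pos h2, if_pos h3, sub_self]
        · intro h; exact absurd hi h
      rw [← map_sub (y i), h1, map_smul, smul_eq_mul]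
      ring
    -- the key step: evaluation of g ∘ J against near-unit vectors lands in B
    have step : ∀ (v : ℕ → Y) (s : ℝ), ‖J v‖ < s → g (J v) ≤ sSup B * s := by
      intro v s hs
      have hspos : 0 < s := lt_of_le_of_lt (norm_nonneg _) hs
      set v' : ℕ → Y := fun i => s⁻¹ • v i with hv'def
      have hsign : ∀ ε : ℕ → Bool, ‖∑ i ∈ I, (if ε i then (1:ℝ) else -1) • v' i‖ ≤ 1 := by
        intro ε
        set εF : Finset ℕ := I.filter (fun i => ε i = true) with hεF
        have hεFP : εF ∈ I.powerset := Finset.mem_powerset.2 (Finset.filter_subset _ _)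
        have heq : ∑ i ∈ I, (if ε i then (1:ℝ) else -1) • v' i = s⁻¹ • J v ⟨εF, hεFP⟩ := by
          rw [hJapp, Finset.smul_sum]
          refine Finset.sum_congr rfl fun i hi => ?_
          rw [hv'def]
          have : sg εF i = if ε i then (1:ℝ) else -1 := by
            have hmem : i ∈ εF ↔ ε i = true := by
              rw [hεF, Finset.mem_filter]
              exact ⟨fun h => h.2, fun h => ⟨hi, h⟩⟩
            rw [hsgdef]
            dsimp only
            by_cases h : ε i = true
            · rw [if_pos (hmem.2 h), if_pos h]
            · rw [if_neg (fun hc => h (hmem.1 hc)), if_neg h]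
          rw [this]
          dsimp only
          rw [smul_comm]
        rw [heq, norm_smul, Real.norm_eq_abs, abs_of_nonneg (by positivity)]
        have h1 : ‖J v ⟨εF, hεFP⟩‖ ≤ ‖J v‖ := norm_le_pi_norm (J v) _
        calc s⁻¹ * ‖J v ⟨εF, hεFP⟩‖ ≤ s⁻¹ * s := by
              refine mul_le_mul_of_nonneg_left (le_trans h1 hs.le) (by positivity)
          _ = 1 := inv_mul_cancel₀ hspos.ne'
      set S : czero →L[ℝ] Y := ∑ i ∈ I, (czeroEval i).smulRight (v' i) with hSdef
      have hSapp : ∀ x : czero, S x = ∑ i ∈ I, x i • v' i := by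
        intro x
        rw [hSdef, ContinuousLinearMap.sum_apply]
        refine Finset.sum_congr rfl fun i _ => ?_
        rw [ContinuousLinearMap.smulRight_apply, czeroEval_apply]
      have hSnorm : ‖S‖ ≤ 1 := by
        refine ContinuousLinearMap.opNorm_le_bound _ zero_le_one ?_
        intro x
        rw [hSapp, one_mul]
        by_cases hx : x = 0
        · subst hx
          simp [ZeroAtInftyContinuousMap.coe_zero]
        · have hxn : 0 < ‖x‖ := norm_pos_iff.2 hx
          have key := sign_bound (fun i => ‖x‖ • v' i) ‖x‖ I 0 (fun i => ‖x‖⁻¹ * x i)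
            (fun i _ => by
              rw [abs_mul, abs_of_nonneg (by positivity)]
              calc ‖x‖⁻¹ * |x i| ≤ ‖x‖⁻¹ * ‖x‖ :=
                    mul_le_mul_of_nonneg_left (czero_abs_apply_le_norm x i) (by positivity)
                _ = 1 := inv_mul_cancel₀ hxn.ne')
            (fun ε => by
              rw [zero_add]
              have : ∑ i ∈ I, (if ε i then (1:ℝ) else -1) • ‖x‖ • v' i
                  = ‖x‖ • ∑ i ∈ I, (if ε i then (1:ℝ) else -1) • v' i := by
                rw [Finset.smul_sum]
                refine Finset.sum_congr rfl fun i _ => ?_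
                rw [smul_comm]
              rw [this, norm_smul, Real.norm_of_nonneg (norm_nonneg _)]
              calc ‖x‖ * ‖∑ i ∈ I, (if ε i then (1:ℝ) else -1) • v' i‖ ≤ ‖x‖ * 1 :=
                    mul_le_mul_of_nonneg_left (hsign ε) (norm_nonneg _)
                _ = ‖x‖ := mul_one _)
          rw [zero_add] at key
          have heq : ∑ i ∈ I, (‖x‖⁻¹ * x i) • ‖x‖ • v' i = ∑ i ∈ I, x i • v' i := by
            refine Finset.sum_congr rfl fun i _ => ?_
            rw [smul_smul]
            congr 1
            field_simp
          rw [heq] at key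
          exact key
      have hScpt : IsCompactOperator S := by
        rw [hSdef]
        exact isCompactOperator_finsetSum I _
          (fun i _ => isCompactOperator_smulRight (czeroEval i) (v' i))
      have hSe : ∀ i ∈ I, S (czeroBasis i) = v' i := by
        intro i hi
        rw [hSapp, Finset.sum_eq_single i]
        · rw [czeroBasis_apply, if_pos rfl, one_smul]
        · intro j hj hji
          rw [czeroBasis_apply, if_neg hji, zero_smul]
        · intro h; exact absurd hi h
      have hrB : (∑ i ∈ I, α i * y i (v' i)) ∈ B := by
        refine ⟨S, hSnorm, hScpt, ?_⟩
        refine Finset.sum_congr rfl fun i hi => ?_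
        rw [hSe i hi]
      have hle : ∑ i ∈ I, α i * y i (v' i) ≤ sSup B := le_csSup hBddB hrB
      have hcalc : g (J v) = s * ∑ i ∈ I, α i * y i (v' i) := by
        rw [hgJ, Finset.mul_sum]
        refine Finset.sum_congr rfl fun i _ => ?_
        rw [hv'def]
        dsimp only
        rw [map_smul, smul_eq_mul]
        field_simp
      rw [hcalc, mul_comm (sSup B) s]
      exact mul_le_mul_of_nonneg_left hle hspos.le
    -- the restriction of g to the range of J has norm at most sSup B
    have habs : ∀ v : ℕ → Y, |g (J v)| ≤ sSup B * ‖J v‖ := by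
      have hkey : ∀ v : ℕ → Y, g (J v) ≤ sSup B * ‖J v‖ := by
        intro v
        refine le_of_forall_pos_le_add ?_
        intro δ hδ
        have hs : ‖J v‖ < ‖J v‖ + δ / (sSup B + 1) := by
          have : 0 < δ / (sSup B + 1) := by positivity
          linarith
        refine le_trans (step v _ hs) ?_
        rw [mul_add]
        have h2 : sSup B * (δ / (sSup B + 1)) ≤ δ := by
          rw [mul_div_assoc']
          rw [div_le_iff₀ (by positivity)]
          nlinarith [hM0, hδ]
        linarith
      intro v
      rw [abs_le]
      constructor
      · have := hkey (-v)
        rw [map_neg, map_neg, norm_neg] at this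
        linarith
      · exact hkey v
    have hfnorm : ‖(g.comp (LinearMap.range J).subtypeL :
        ↥(LinearMap.range J) →L[ℝ] ℝ)‖ ≤ sSup B := by
      refine ContinuousLinearMap.opNorm_le_bound _ hM0 ?_
      rintro ⟨w, hw⟩
      obtain ⟨v, rfl⟩ := hw
      have := habs v
      simpa [Real.norm_eq_abs] using this
    obtain ⟨G, hGext, hGnorm⟩ :=
      exists_extension_norm_eq (LinearMap.range J) (g.comp (LinearMap.range J).subtypeL)
    have hGJ : ∀ v : ℕ → Y, G (J v) = ∑ i ∈ I, α i * y i (v i) := by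
      intro v
      have h1 := hGext ⟨J v, LinearMap.mem_range_self J v⟩
      rw [h1]
      simpa using hgJ v
    -- the coordinate functionals of G
    set ws : E → (Y →L[ℝ] ℝ) := fun ε => G.comp (ContinuousLinearMap.pi
      (fun ε' : E => if ε' = ε then ContinuousLinearMap.id ℝ Y else 0)) with hwsdef
    have hws : ∀ w : E → Y, G w = ∑ ε : E, ws ε (w ε) := by
      intro w
      have h1 : ∀ ε : E, ws ε (w ε) = G (fun ε' => if ε' = ε then w ε else 0) := by
        intro ε
        rw [hwsdef]
        dsimp only
        rw [ContinuousLinearMap.comp_apply]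
        congr 1
        funext ε'
        rw [ContinuousLinearMap.pi_apply]
        split_ifs with h
        · subst h; rfl
        · rfl
      calc G w = G (∑ ε : E, (fun ε' => if ε' = ε then w ε else 0)) := by
            congr 1
            funext ε'
            rw [Finset.sum_apply]
            rw [Finset.sum_ite_eq Finset.univ ε' w]
            rw [if_pos (Finset.mem_univ ε')]
        _ = ∑ ε : E, G (fun ε' => if ε' = ε then w ε else 0) := map_sum G _ _
        _ = ∑ ε : E, ws ε (w ε) := by
            refine Finset.sum_congr rfl fun ε _ => ?_
            rw [h1]
    -- decomposition of the functionals α i • y i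
    have hz : ∀ i ∈ I, α i • y i = ∑ ε : E, sg ε.1 i • ws ε := by
      intro i hi
      ext u
      have hv := hGJ (fun j => if j = i then u else 0)
      have hJv : J (fun j => if j = i then u else 0) = fun ε : E => sg ε.1 i • u := by
        funext ε
        rw [hJapp, Finset.sum_eq_single i]
        · rw [if_pos rfl]
        · intro j hj hji
          rw [if_neg hji, smul_zero]
        · intro h; exact absurd hi h
      rw [hJv] at hv
      have hL : G (fun ε : E => sg ε.1 i • u) = ∑ ε : E, sg ε.1 i * ws ε u := by
        rw [hws]
        refine Finset.sum_congr rfl fun ε _ => ?_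
        rw [map_smul, smul_eq_mul]
      have hR : ∑ j ∈ I, α j * y j (if j = i then u else 0) = α i * y i u := by
        rw [Finset.sum_eq_single i]
        · rw [if_pos rfl]
        · intro j hj hji
          rw [if_neg hji, map_zero, mul_zero]
        · intro h; exact absurd hi h
      rw [hL, hR] at hv
      rw [ContinuousLinearMap.smul_apply, smul_eq_mul, ← hv, ContinuousLinearMap.sum_apply]
      refine Finset.sum_congr rfl fun ε _ => ?_
      rw [ContinuousLinearMap.smul_apply, smul_eq_mul]
    -- rewrite a as a double sum
    have ha : ∑ i ∈ I, α i * (T (y i) : ∀ _ : ℕ, ℝ) i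
        = ∑ ε : E, ∑ i ∈ I, sg ε.1 i * (T (ws ε) : ∀ _ : ℕ, ℝ) i := by
      rw [← Finset.sum_comm]
      refine Finset.sum_congr rfl fun i hi => ?_
      have h1 : α i * (T (y i) : ∀ _ : ℕ, ℝ) i = (T (α i • y i) : ∀ _ : ℕ, ℝ) i := by
        rw [map_smul, lp.coeFn_smul, Pi.smul_apply, smul_eq_mul]
      rw [h1, hz i hi, map_sum, lp.coeFn_sum, Finset.sum_apply]
      refine Finset.sum_congr rfl fun ε _ => ?_
      rw [map_smul, lp.coeFn_smul, Pi.smul_apply, smul_eq_mul]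
    have hbound1 : ∀ ε : E, ∑ i ∈ I, sg ε.1 i * (T (ws ε) : ∀ _ : ℕ, ℝ) i ≤ ‖ws ε‖ := by
      intro ε
      calc ∑ i ∈ I, sg ε.1 i * (T (ws ε) : ∀ _ : ℕ, ℝ) i
          ≤ ∑ i ∈ I, |(T (ws ε) : ∀ _ : ℕ, ℝ) i| := by
            refine Finset.sum_le_sum fun i _ => ?_
            calc sg ε.1 i * (T (ws ε) : ∀ _ : ℕ, ℝ) i
                ≤ |sg ε.1 i * (T (ws ε) : ∀ _ : ℕ, ℝ) i| := le_abs_self _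
              _ = |sg ε.1 i| * |(T (ws ε) : ∀ _ : ℕ, ℝ) i| := abs_mul _ _
              _ ≤ 1 * |(T (ws ε) : ∀ _ : ℕ, ℝ) i| :=
                  mul_le_mul_of_nonneg_right (hsgabs ε.1 i) (abs_nonneg _)
              _ = _ := one_mul _
        _ ≤ ‖T (ws ε)‖ := lp_sum_abs_le_norm _ I
        _ ≤ ‖T‖ * ‖ws ε‖ := T.le_opNorm _
        _ ≤ 1 * ‖ws ε‖ := mul_le_mul_of_nonneg_right hT (norm_nonneg _)
        _ = ‖ws ε‖ := one_mul _
    have hsum_ws : ∑ ε : E, ‖ws ε‖ ≤ ‖G‖ := by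
      refine le_of_forall_pos_le_add ?_
      intro δ hδ
      set n : ℕ := Fintype.card E with hn
      have hδ' : 0 < δ / (n + 1) := by positivity
      choose u hu1 hu2 using fun ε : E => exists_near_norm (ws ε) hδ'
      have hGu : G u = ∑ ε : E, ws ε (u ε) := hws u
      have hun : ‖u‖ ≤ 1 := by
        refine (pi_norm_le_iff_of_nonneg zero_le_one).2 ?_
        intro ε
        exact hu1 ε
      calc ∑ ε : E, ‖ws ε‖ ≤ ∑ ε : E, (ws ε (u ε) + δ / (n + 1)) :=
            Finset.sum_le_sum fun ε _ => hu2 ε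
        _ = G u + n * (δ / (n + 1)) := by
            rw [Finset.sum_add_distrib, ← hGu, Finset.sum_const, Finset.card_univ, ← hn,
              nsmul_eq_mul]
        _ ≤ ‖G‖ + δ := by
            have h1 : G u ≤ ‖G‖ := by
              calc G u ≤ |G u| := le_abs_self _
                _ ≤ ‖G‖ * ‖u‖ := by simpa [Real.norm_eq_abs] using G.le_opNorm u
                _ ≤ ‖G‖ * 1 := mul_le_mul_of_nonneg_left hun (norm_nonneg _)
                _ = ‖G‖ := mul_one _
            have h2 : (n : ℝ) * (δ / (n + 1)) ≤ δ := by
              rw [mul_div_assoc']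
              rw [div_le_iff₀ (by positivity)]
              nlinarith [hδ]
            linarith
    calc ∑ i ∈ I, α i * (T (y i) : ∀ _ : ℕ, ℝ) i
        = ∑ ε : E, ∑ i ∈ I, sg ε.1 i * (T (ws ε) : ∀ _ : ℕ, ℝ) i := ha
      _ ≤ ∑ ε : E, ‖ws ε‖ := Finset.sum_le_sum fun ε _ => hbound1 ε
      _ ≤ ‖G‖ := hsum_ws
      _ = _ := hGnorm
      _ ≤ sSup B := hfnorm
  · -- easy direction: B ≤ sSup A
    refine csSup_le ⟨0, h0B⟩ ?_
    rintro b ⟨S, hS, hScpt, rfl⟩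
    refine le_csSup hBddA ?_
    set T : StrongDual ℝ Y →L[ℝ] ell1 := ∑ i ∈ I,
      ((NormedSpace.inclusionInDoubleDual ℝ Y (S (czeroBasis i))).smulRight
        (lp.single 1 i (1:ℝ) : ell1)) with hTdef
    have hTapp : ∀ z : StrongDual ℝ Y,
        T z = ∑ i ∈ I, z (S (czeroBasis i)) • (lp.single 1 i (1:ℝ) : ell1) := by
      intro z
      rw [hTdef, ContinuousLinearMap.sum_apply]
      refine Finset.sum_congr rfl fun i _ => ?_
      rw [ContinuousLinearMap.smulRight_apply]
      congr 1
    have hTcoord : ∀ z : StrongDual ℝ Y, ∀ j ∈ I,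
        (T z : ∀ _ : ℕ, ℝ) j = z (S (czeroBasis j)) := by
      intro z j hj
      rw [hTapp, lp.coeFn_sum, Finset.sum_apply]
      rw [Finset.sum_eq_single j]
      · rw [lp.coeFn_smul, Pi.smul_apply, lp.single_apply_self, smul_eq_mul, mul_one]
      · intro i hi hij
        rw [lp.coeFn_smul, Pi.smul_apply, lp.single_apply_ne 1 i _ (Ne.symm hij), smul_zero]
      · intro hj'; exact absurd hj hj'
    have hTnorm : ‖T‖ ≤ 1 := by
      refine ContinuousLinearMap.opNorm_le_bound _ zero_le_one ?_
      intro z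
      rw [hTapp]
      set sg : ℕ → ℝ := fun i => if 0 ≤ z (S (czeroBasis i)) then (1:ℝ) else -1 with hsgdef
      have hsgabs : ∀ i, |sg i| ≤ 1 := by
        intro i; rw [hsgdef]; dsimp only; split <;> simp
      set x : czero := ∑ i ∈ I, sg i • czeroBasis i with hxdef
      have hxnorm : ‖x‖ ≤ 1 := by
        refine czero_norm_le _ zero_le_one fun j => ?_
        rw [hxdef, czero_coe_sum]
        have : ∀ i ∈ I, (sg i • czeroBasis i) j = if j = i then sg i else 0 := by
          intro i _
          show sg i * czeroBasis i j = _
          rw [czeroBasis_apply]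
          split <;> simp
        rw [Finset.sum_congr rfl this, Finset.sum_ite_eq I j sg]
        split
        · exact hsgabs j
        · simp
      calc ‖∑ i ∈ I, z (S (czeroBasis i)) • (lp.single 1 i (1:ℝ) : ell1)‖
          ≤ ∑ i ∈ I, ‖z (S (czeroBasis i)) • (lp.single 1 i (1:ℝ) : ell1)‖ :=
            norm_sum_le _ _
        _ = ∑ i ∈ I, |z (S (czeroBasis i))| := by
            refine Finset.sum_congr rfl fun i _ => ?_
            rw [norm_smul, lp_norm_single_one, abs_one, mul_one, Real.norm_eq_abs]
        _ = z (S x) := by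
            rw [hxdef, map_sum, map_sum]
            refine Finset.sum_congr rfl fun i _ => ?_
            rw [map_smul, map_smul, smul_eq_mul, hsgdef]
            dsimp only
            split_ifs with h
            · rw [abs_of_nonneg h, one_mul]
            · rw [abs_of_neg (lt_of_not_ge h)]; ring
        _ ≤ ‖z‖ * ‖S x‖ :=
            le_trans (le_abs_self _) (by simpa [Real.norm_eq_abs] using z.le_opNorm (S x))
        _ ≤ ‖z‖ * (‖S‖ * ‖x‖) := by
            refine mul_le_mul_of_nonneg_left (S.le_opNorm x) (norm_nonneg _)
        _ ≤ ‖z‖ * (1 * 1) := by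
            refine mul_le_mul_of_nonneg_left ?_ (norm_nonneg _)
            exact mul_le_mul hS hxnorm (norm_nonneg _) zero_le_one
        _ = 1 * ‖z‖ := by ring
    refine ⟨T, hTnorm, ?_⟩
    refine Finset.sum_congr rfl fun i hi => ?_
    rw [hTcoord (y i) i hi]
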